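/- Let λ ≥ 2 be an integer and let p be a source with 1/(2^λ − 1) ≤ p(1) < 2^{−(λ−1)}. Then R*_opt(p) ≥ lg((1 − p(1))/(1 − 2^{−λ+1})). -/

import Mathlib

/-- A source: a positive, monotonically nonincreasing probability mass function on `Fin n`. -/
def IsSource (n : ℕ) (p : Fin n → ℝ) : Prop :=
  (∀ i, 0 < p i) ∧ (∑ i, p i = 1) ∧ (∀ i j : Fin n, i ≤ j → p j ≤ p i)

/-- A codeword-length vector: positive integer lengths satisfying the Kraft inequality. -/
def IsCLV (n : ℕ) (l : Fin n → ℤ) : Prop :=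
  (∀ i, 1 ≤ l i) ∧ (∑ i, (2:ℝ) ^ (-(l i)) ≤ 1)

/-- Maximum pointwise redundancy `R*(l,p) = max_i (l(i) + lg p(i))`. -/
noncomputable def Rstar (n : ℕ) (l : Fin n → ℤ) (p : Fin n → ℝ) : ℝ :=
  ⨆ i : Fin n, ((l i : ℝ) + Real.logb 2 (p i))

/-- Minimum maximum pointwise redundancy over all codeword-length vectors. -/
noncomputable def RstarOpt (n : ℕ) (p : Fin n → ℝ) : ℝ :=
  sInf {r : ℝ | ∃ l : Fin n → ℤ, IsCLV n l ∧ Rstar n l p = r}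

theorem stmt5 (n : ℕ) (hn : 2 ≤ n) (lam : ℕ) (hlam : 2 ≤ lam)
    (p : Fin n → ℝ) (hp : IsSource n p)
    (h1 : 1 / ((2:ℝ) ^ lam - 1) ≤ p ⟨0, by omega⟩)
    (h2 : p ⟨0, by omega⟩ < (2:ℝ) ^ (-(lam:ℤ) + 1)) :
    Real.logb 2 ((1 - p ⟨0, by omega⟩) / (1 - (2:ℝ) ^ (-(lam:ℤ) + 1))) ≤ RstarOpt n p := by
  haveI : Nonempty (Fin n) := ⟨⟨0, by omega⟩⟩
  set i0 : Fin n := ⟨0, by omega⟩ with hi0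
  set P1 : ℝ := p i0 with hP1
  set c : ℝ := (2:ℝ) ^ (-(lam:ℤ) + 1) with hc
  have hcpos : 0 < c := by positivity
  have hc2 : c ≤ 1/2 := by
    rw [hc]
    calc (2:ℝ) ^ (-(lam:ℤ) + 1) ≤ (2:ℝ) ^ (-1 : ℤ) := by
          apply zpow_le_zpow_right₀ (by norm_num)
          omega
      _ = 1/2 := by norm_num
  have hP1pos : 0 < P1 := hp.1 i0
  have hP1lt : P1 < 1 := by linarith
  have h1c : (0:ℝ) < 1 - c := by linarith
  have h1P1 : (0:ℝ) < 1 - P1 := by linarith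
  have hqpos : 0 < (1 - P1) / (1 - c) := div_pos h1P1 h1c
  have hpow : (0:ℝ) < (2:ℝ)^lam - 1 := by
    have : (2:ℝ)^1 ≤ (2:ℝ)^lam := pow_le_pow_right₀ (by norm_num) (by omega)
    norm_num at this ⊢; linarith
  -- 2^lam * c = 2
  have hlc : (2:ℝ)^lam * c = 2 := by
    rw [hc, ← zpow_natCast (2:ℝ) lam, ← zpow_add₀ (by norm_num : (2:ℝ) ≠ 0)]
    norm_num
  apply le_csInf
  · -- nonempty: constant length n
    refine ⟨Rstar n (fun _ => (n:ℤ)) p, fun _ => (n:ℤ), ⟨fun _ => by show (1:ℤ) ≤ (n:ℤ); omega, ?_⟩, rfl⟩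
    have : ∑ _i : Fin n, (2:ℝ) ^ (-(n:ℤ)) = n * (2:ℝ)^(-(n:ℤ)) := by
      rw [Finset.sum_const, Finset.card_univ, Fintype.card_fin, nsmul_eq_mul]
    rw [this, zpow_neg, zpow_natCast]
    rw [mul_inv_le_iff₀ (by positivity), one_mul]
    exact_mod_cast (Nat.lt_two_pow_self (n := n)).le
  · rintro r ⟨l, ⟨hl1, hlK⟩, rfl⟩
    set R : ℝ := Rstar n l p with hR
    -- pointwise bound
    have hpt : ∀ i, (l i : ℝ) + Real.logb 2 (p i) ≤ R := by
      intro i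
      rw [hR]
      exact le_ciSup (f := fun j => ((l j : ℝ) + Real.logb 2 (p j)))
        (Set.Finite.bddAbove (Set.finite_range _)) i
    have hkey : ∀ i : Fin n, p i * (2:ℝ) ^ (-R) ≤ (2:ℝ) ^ (-(l i)) := by
      intro i
      have h := hpt i
      have hpi : p i = (2:ℝ) ^ (Real.logb 2 (p i)) :=
        (Real.rpow_logb (by norm_num) (by norm_num) (hp.1 i)).symm
      have : p i ≤ (2:ℝ) ^ (R - (l i : ℝ)) := by
        rw [hpi]
        exact Real.rpow_le_rpow_of_exponent_le (by norm_num) (by linarith)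
      calc p i * (2:ℝ)^(-R) ≤ (2:ℝ)^(R - (l i:ℝ)) * (2:ℝ)^(-R) := by
            apply mul_le_mul_of_nonneg_right this (by positivity)
        _ = (2:ℝ) ^ (((-(l i) : ℤ) : ℝ)) := by
            rw [← Real.rpow_add (by norm_num)]; push_cast; ring_nf
        _ = (2:ℝ) ^ (-(l i)) := Real.rpow_intCast 2 (-(l i))
    -- sum over i ≠ i0
    have hsum : (1 - P1) * (2:ℝ)^(-R) ≤ 1 - (2:ℝ)^(-(l i0)) := by
      have e1 : ∑ i ∈ Finset.univ.erase i0, p i = 1 - P1 := by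
        have := Finset.sum_erase_add Finset.univ p (Finset.mem_univ i0)
        rw [hp.2.1] at this; linarith
      have e2 : ∑ i ∈ Finset.univ.erase i0, (2:ℝ)^(-(l i)) ≤ 1 - (2:ℝ)^(-(l i0)) := by
        have := Finset.sum_erase_add Finset.univ (fun i => (2:ℝ)^(-(l i))) (Finset.mem_univ i0)
        linarith
      calc (1 - P1) * (2:ℝ)^(-R) = ∑ i ∈ Finset.univ.erase i0, p i * (2:ℝ)^(-R) := by
            rw [← Finset.sum_mul, e1]
        _ ≤ ∑ i ∈ Finset.univ.erase i0, (2:ℝ)^(-(l i)) :=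
            Finset.sum_le_sum (fun i _ => hkey i)
        _ ≤ 1 - (2:ℝ)^(-(l i0)) := e2
    rcases le_or_gt (l i0) ((lam:ℤ) - 1) with hcase | hcase
    · -- small l i0
      have hzl : c ≤ (2:ℝ)^(-(l i0)) := by
        rw [hc]; apply zpow_le_zpow_right₀ (by norm_num); omega
      have h3 : (1 - P1) * (2:ℝ)^(-R) ≤ 1 - c := by linarith
      have h4 : (1 - P1) / (1 - c) ≤ (2:ℝ)^R := by
        rw [div_le_iff₀ h1c]
        have h5 : (2:ℝ)^(-R) * (2:ℝ)^R = 1 := by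
          rw [← Real.rpow_add (by norm_num)]; norm_num
        calc 1 - P1 = ((1 - P1) * (2:ℝ)^(-R)) * (2:ℝ)^R := by
              rw [mul_assoc, h5, mul_one]
          _ ≤ (1 - c) * (2:ℝ)^R := by
              apply mul_le_mul_of_nonneg_right h3 (by positivity)
          _ = (2:ℝ)^R * (1 - c) := mul_comm _ _
      calc Real.logb 2 ((1 - P1)/(1 - c)) ≤ Real.logb 2 ((2:ℝ)^R) :=
            Real.logb_le_logb_of_le (by norm_num) hqpos h4
        _ = R := Real.logb_rpow (by norm_num) (by norm_num)
    · -- l i0 ≥ lam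
      have h6 : (1 - P1) / (1 - c) ≤ (2:ℝ)^lam * P1 := by
        rw [div_le_iff₀ h1c]
        have h7 : 1 ≤ P1 * ((2:ℝ)^lam - 1) := by
          rw [div_le_iff₀ hpow] at h1; linarith
        nlinarith [hlc]
      have h8 : Real.logb 2 ((2:ℝ)^lam * P1) = (lam:ℝ) + Real.logb 2 P1 := by
        rw [Real.logb_mul (by positivity) (ne_of_gt hP1pos), Real.logb_pow]
        simp [Real.logb_self_eq_one]
      calc Real.logb 2 ((1 - P1)/(1 - c)) ≤ Real.logb 2 ((2:ℝ)^lam * P1) :=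
            Real.logb_le_logb_of_le (by norm_num) hqpos h6
        _ = (lam:ℝ) + Real.logb 2 P1 := h8
        _ ≤ (l i0 : ℝ) + Real.logb 2 P1 := by
            have h9 : (lam:ℤ) ≤ l i0 := by omega
            have : (lam:ℝ) ≤ (l i0 : ℝ) := by exact_mod_cast h9
            linarith
        _ ≤ R := hpt i0
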